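/- (Proposition 1) Suppose M > 0, c > 0, α1 > α2 > 0, and α3 > 0, and let q(n) = α1 − α2·exp(−α3·n). Then the standalone profit function F(p_s, n) = M·p_s·(1 − p_s/q(n)) − n·c is concave on the convex set ℝ × [0, ∞): at every point (p_s, n) with n ≥ 0, its Hessian matrix H, with entries H₁₁ = −2M/q(n), H₁₂ = H₂₁ = 2M·α2·α3·p_s·exp(−α3·n)/q(n)², and H₂₂ = −2M·α2²·α3²·p_s²·exp(−2α3·n)/q(n)³ − M·α2·α3²·p_s²·exp(−α3·n)/q(n)², is negative semidefinite. -/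

import Mathlib

open Real Set


private lemma aux_psd (M α2 α3 p e q : ℝ) (hM : 0 < M) (he : 0 < e) (hq : 0 < q)
    (hα2 : 0 < α2) :
    Matrix.PosSemidef
      (-!![-2 * M / q, 2 * M * α2 * α3 * p * e / q ^ 2;
          2 * M * α2 * α3 * p * e / q ^ 2,
          -2 * M * α2 ^ 2 * α3 ^ 2 * p ^ 2 * e ^ 2 / q ^ 3
          - M * α2 * α3 ^ 2 * p ^ 2 * e / q ^ 2] : Matrix (Fin 2) (Fin 2) ℝ) := by
  refine Matrix.posSemidef_iff_dotProduct_mulVec.mpr ⟨?_, fun x => ?_⟩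
  · ext i j
    fin_cases i <;> fin_cases j <;> simp [Matrix.conjTranspose_apply]
  · have hx : dotProduct (star x)
        (Matrix.mulVec (-!![-2 * M / q, 2 * M * α2 * α3 * p * e / q ^ 2;
          2 * M * α2 * α3 * p * e / q ^ 2,
          -2 * M * α2 ^ 2 * α3 ^ 2 * p ^ 2 * e ^ 2 / q ^ 3
          - M * α2 * α3 ^ 2 * p ^ 2 * e / q ^ 2] : Matrix (Fin 2) (Fin 2) ℝ) x) =
        (2 * M * (q * x 0 - α2 * α3 * p * e * x 1) ^ 2
          + M * α2 * α3 ^ 2 * p ^ 2 * e * q * (x 1) ^ 2) / q ^ 3 := by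
      simp [dotProduct, Matrix.mulVec, Fin.sum_univ_two]
      field_simp
      ring
    rw [hx]
    positivity


private lemma aux_concave (M c p₁ p₂ n₁ n₂ t₁ t₂ T a b : ℝ) (hM : 0 < M)
    (ht₁ : 0 < t₁) (ht₂ : 0 < t₂) (hT : a * t₁ + b * t₂ ≤ T)
    (ha : 0 ≤ a) (hb : 0 ≤ b) (hab : a + b = 1) :
    a * (M * p₁ * (1 - p₁ / t₁) - n₁ * c) + b * (M * p₂ * (1 - p₂ / t₂) - n₂ * c)
      ≤ M * (a * p₁ + b * p₂) * (1 - (a * p₁ + b * p₂) / T)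
        - (a * n₁ + b * n₂) * c := by
  have hm : 0 < min t₁ t₂ := lt_min ht₁ ht₂
  have hS : 0 < a * t₁ + b * t₂ := by
    have h1 := mul_le_mul_of_nonneg_left (min_le_left t₁ t₂) ha
    have h2 := mul_le_mul_of_nonneg_left (min_le_right t₁ t₂) hb
    nlinarith
  have hT0 : 0 < T := hS.trans_le hT
  have step1 : (a * p₁ + b * p₂) ^ 2 / T ≤ (a * p₁ + b * p₂) ^ 2 / (a * t₁ + b * t₂) :=
    div_le_div_of_nonneg_left (sq_nonneg _) hS hT
  have step2 : (a * p₁ + b * p₂) ^ 2 / (a * t₁ + b * t₂) ≤ a * (p₁ ^ 2 / t₁) + b * (p₂ ^ 2 / t₂) := by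
    have hrhs : a * (p₁ ^ 2 / t₁) + b * (p₂ ^ 2 / t₂)
        = (a * p₁ ^ 2 * t₂ + b * p₂ ^ 2 * t₁) / (t₁ * t₂) := by
      field_simp
    rw [hrhs, div_le_div_iff₀ hS (mul_pos ht₁ ht₂)]
    nlinarith [mul_nonneg (mul_nonneg ha hb) (sq_nonneg (p₁ * t₂ - p₂ * t₁))]
  have h : (a * p₁ + b * p₂) ^ 2 / T ≤ a * (p₁ ^ 2 / t₁) + b * (p₂ ^ 2 / t₂) := step1.trans step2
  have hMh := mul_le_mul_of_nonneg_left h hM.le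
  have eL1 : M * p₁ * (1 - p₁ / t₁) - n₁ * c
      = M * p₁ - M * (p₁ ^ 2 / t₁) - n₁ * c := by ring
  have eL2 : M * p₂ * (1 - p₂ / t₂) - n₂ * c
      = M * p₂ - M * (p₂ ^ 2 / t₂) - n₂ * c := by ring
  have eR : M * (a * p₁ + b * p₂) * (1 - (a * p₁ + b * p₂) / T) - (a * n₁ + b * n₂) * c
      = M * (a * p₁ + b * p₂) - M * ((a * p₁ + b * p₂) ^ 2 / T) - (a * n₁ + b * n₂) * c := by ring
  rw [eL1, eL2, eR]
  have hMP : M * (a * p₁ + b * p₂) = a * (M * p₁) + b * (M * p₂) := by ring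
  nlinarith [hMh]

/-- Proposition 1: With `M > 0`, `c > 0`, `α1 > α2 > 0`, `α3 > 0` and
`q n = α1 - α2 * exp (-α3 * n)`, the standalone profit function
`F (p_s, n) = M * p_s * (1 - p_s / q n) - n * c` is concave on `ℝ × [0, ∞)`:
at every point `(p_s, n)` with `n ≥ 0`, its Hessian matrix (with the displayed
entries) is negative semidefinite. -/
theorem standalone_profit_concave (M c α1 α2 α3 : ℝ) (hM : 0 < M) (hc : 0 < c)
    (hα12 : α2 < α1) (hα2 : 0 < α2) (hα3 : 0 < α3) :
    (∀ p_s n : ℝ, 0 ≤ n →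
      Matrix.PosSemidef
        (-!![-2 * M / (α1 - α2 * Real.exp (-α3 * n)),
            2 * M * α2 * α3 * p_s * Real.exp (-α3 * n) /
              (α1 - α2 * Real.exp (-α3 * n)) ^ 2;
            2 * M * α2 * α3 * p_s * Real.exp (-α3 * n) /
              (α1 - α2 * Real.exp (-α3 * n)) ^ 2,
            -2 * M * α2 ^ 2 * α3 ^ 2 * p_s ^ 2 * Real.exp (-2 * α3 * n) /
              (α1 - α2 * Real.exp (-α3 * n)) ^ 3
            - M * α2 * α3 ^ 2 * p_s ^ 2 * Real.exp (-α3 * n) /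
              (α1 - α2 * Real.exp (-α3 * n)) ^ 2] : Matrix (Fin 2) (Fin 2) ℝ)) ∧
    ConcaveOn ℝ (Set.univ ×ˢ Set.Ici (0 : ℝ))
      (fun x : ℝ × ℝ =>
        M * x.1 * (1 - x.1 / (α1 - α2 * Real.exp (-α3 * x.2))) - x.2 * c) := by
  constructor
  · intro p n hn
    have he : 0 < Real.exp (-α3 * n) := Real.exp_pos _
    have he1 : Real.exp (-α3 * n) ≤ 1 := by
      rw [Real.exp_le_one_iff]; nlinarith
    have hq : 0 < α1 - α2 * Real.exp (-α3 * n) := by nlinarith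
    have he2 : Real.exp (-2 * α3 * n) = Real.exp (-α3 * n) ^ 2 := by
      rw [sq, ← Real.exp_add]; congr 1; ring
    rw [he2]
    exact aux_psd M α2 α3 p (Real.exp (-α3 * n)) (α1 - α2 * Real.exp (-α3 * n))
      hM he hq hα2
  · refine ⟨convex_univ.prod (convex_Ici 0), ?_⟩
    rintro ⟨p₁, n₁⟩ ⟨-, hn₁⟩ ⟨p₂, n₂⟩ ⟨-, hn₂⟩ a b ha hb hab
    have hn₁' : (0:ℝ) ≤ n₁ := hn₁
    have hn₂' : (0:ℝ) ≤ n₂ := hn₂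
    simp only [Prod.smul_mk, Prod.mk_add_mk, smul_eq_mul]
    have he₁ : 0 < Real.exp (-α3 * n₁) := Real.exp_pos _
    have he₂ : 0 < Real.exp (-α3 * n₂) := Real.exp_pos _
    have he₁1 : Real.exp (-α3 * n₁) ≤ 1 := by
      rw [Real.exp_le_one_iff]; nlinarith
    have he₂1 : Real.exp (-α3 * n₂) ≤ 1 := by
      rw [Real.exp_le_one_iff]; nlinarith
    have hE : Real.exp (-α3 * (a * n₁ + b * n₂))
        ≤ a * Real.exp (-α3 * n₁) + b * Real.exp (-α3 * n₂) := by
      have h := convexOn_exp.2 (Set.mem_univ (-α3 * n₁)) (Set.mem_univ (-α3 * n₂))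
        ha hb hab
      simp only [smul_eq_mul] at h
      calc Real.exp (-α3 * (a * n₁ + b * n₂))
          = Real.exp (a * (-α3 * n₁) + b * (-α3 * n₂)) := by ring_nf
        _ ≤ a * Real.exp (-α3 * n₁) + b * Real.exp (-α3 * n₂) := h
    obtain ⟨e₁, hee₁⟩ : ∃ t, Real.exp (-α3 * n₁) = t := ⟨_, rfl⟩
    obtain ⟨e₂, hee₂⟩ : ∃ t, Real.exp (-α3 * n₂) = t := ⟨_, rfl⟩
    obtain ⟨E, heE⟩ : ∃ t, Real.exp (-α3 * (a * n₁ + b * n₂)) = t := ⟨_, rfl⟩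
    rw [hee₁] at he₁ he₁1
    rw [hee₂] at he₂ he₂1
    rw [hee₁, hee₂, heE] at hE ⊢
    have ht₁ : 0 < α1 - α2 * e₁ := by nlinarith
    have ht₂ : 0 < α1 - α2 * e₂ := by nlinarith
    have hT : a * (α1 - α2 * e₁) + b * (α1 - α2 * e₂) ≤ α1 - α2 * E := by nlinarith
    exact aux_concave M c p₁ p₂ n₁ n₂ _ _ _ a b hM ht₁ ht₂ hT ha hb hab
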